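/- arXiv:1703.08358 — 4 statements merged into one kernel-verified Lean document; each statement's English description precedes it below -/
import Mathlib

section
/- Let $f_0\in L^1([0,1])$ and let $\Pi$ be a prior on a Polish space $\Theta$ embedding continuously into $L^1([0,1])$. If for some constants $C>0$ and $A\ge1$ the prior satisfies $\Pi\big(f:\int(f_0-f)\le A\eps_n,\ f\le f_0\big)\ge e^{-Cn\eps_n}$, then $E_{f_0}\big[\Pi\big(f:\int(f_0-f)_+\ge(1+A+C)\eps_n\,\big|\,N\big)\big]\le e^{-n\eps_n}$. In particular, posterior contraction for the one-sided loss $\int(f_0-f)_+$ requires no entropy condition. -/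
open MeasureTheory Real Set Filter
open scoped ENNReal NNReal Topology

noncomputable section

/-- The integral of `f` over `[0,1]`. -/
def intI (f : ℝ → ℝ) : ℝ := ∫ x in Set.Icc (0:ℝ) 1, f x

/-- The `L¹([0,1])` distance between `f` and `g`. -/
def dist1 (f g : ℝ → ℝ) : ℝ := ∫ x in Set.Icc (0:ℝ) 1, |f x - g x|

/-- `∫₀¹ (f-g)₊`. -/
def intPos (f g : ℝ → ℝ) : ℝ := ∫ x in Set.Icc (0:ℝ) 1, max (f x - g x) 0

/-- `f ≤ g` Lebesgue-almost everywhere on `[0,1]`. -/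
def aeLeI (f g : ℝ → ℝ) : Prop :=
  ∀ᵐ x ∂((volume : Measure ℝ).restrict (Set.Icc (0:ℝ) 1)), f x ≤ g x

/-- The intensity measure `λ_f(x,y) = n · 1(f(x) ≤ y)` on `[0,1] × ℝ`. -/
def intensity (n : ℕ) (f : ℝ → ℝ) : Measure (ℝ × ℝ) :=
  ((volume : Measure (ℝ × ℝ)).restrict (Set.Icc (0:ℝ) 1 ×ˢ (Set.univ : Set ℝ))).withDensity
    (fun p => if f p.1 ≤ p.2 then (n : ℝ≥0∞) else 0)

/-- `P` is the law of a Poisson point process with (σ-finite, simple) intensity measure `μ`,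
whose support points are measurably enumerated by `pts`; the law is characterised through its
void probabilities `P(N(A) = 0) = exp(-μ(A))`. -/
def IsPoissonPP {Ω : Type*} [MeasurableSpace Ω] (μ : Measure (ℝ × ℝ)) (P : Measure Ω)
    (pts : Ω → ℕ → ℝ × ℝ) : Prop :=
  IsProbabilityMeasure P ∧ (∀ i, Measurable fun ω => pts ω i) ∧
    ∀ A : Set (ℝ × ℝ), MeasurableSet A →
      P {ω | ∀ i, pts ω i ∉ A} =
        if μ A = ∞ then 0 else ENNReal.ofReal (Real.exp (-(μ A).toReal))

/-- The support boundary detection model: for every `n` and every `f ∈ L¹([0,1])`,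
`P n f` is the law of a Poisson point process with intensity `n · 1(f(x) ≤ y)`,
with support points `(Xᵢ, Yᵢ)ᵢ = pts`. -/
def IsBoundaryModel {Ω : Type*} [MeasurableSpace Ω] (P : ℕ → (ℝ → ℝ) → Measure Ω)
    (pts : Ω → ℕ → ℝ × ℝ) : Prop :=
  ∀ n f, IntegrableOn f (Set.Icc (0:ℝ) 1) → IsPoissonPP (intensity n f) (P n f) pts

/-- The likelihood `e^{n∫f} · 1(∀ i : f(Xᵢ) ≤ Yᵢ)` of `f` given the data `ω`. -/
def lik {Ω : Type*} (n : ℕ) (pts : Ω → ℕ → ℝ × ℝ) (f : ℝ → ℝ) (ω : Ω) : ℝ≥0∞ :=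
  {ω' : Ω | ∀ i, f (pts ω' i).1 ≤ (pts ω' i).2}.indicator
    (fun _ => ENNReal.ofReal (Real.exp (n * intI f))) ω

/-- The posterior mass of the set `B ⊆ Θ` given the data `ω`, for the prior `Pi` on `Θ`
embedded into `L¹([0,1])` via `ι`:
`Π(B | N) = ∫_B e^{n∫f} 1(∀i : f(Xᵢ) ≤ Yᵢ) dΠ(f) / ∫_Θ e^{n∫f} 1(∀i : f(Xᵢ) ≤ Yᵢ) dΠ(f)`. -/
def post {Ω Θ : Type*} [MeasurableSpace Θ] (n : ℕ) (pts : Ω → ℕ → ℝ × ℝ) (Pi : Measure Θ)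
    (ι : Θ → ℝ → ℝ) (B : Set Θ) (ω : Ω) : ℝ≥0∞ :=
  (∫⁻ θ in B, lik n pts (ι θ) ω ∂Pi) / ∫⁻ θ, lik n pts (ι θ) ω ∂Pi

/-- A prior on a Polish space `Θ` which embeds continuously into `L¹([0,1])` via `ι`. -/
def IsL1Prior {Θ : Type*} [MeasurableSpace Θ] [TopologicalSpace Θ] (Pi : Measure Θ)
    (ι : Θ → ℝ → ℝ) : Prop :=
  IsProbabilityMeasure Pi ∧ Measurable (Function.uncurry ι) ∧
    (∀ θ, IntegrableOn (ι θ) (Set.Icc (0:ℝ) 1)) ∧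
    ∀ θ₀, Tendsto (fun θ => dist1 (ι θ) (ι θ₀)) (𝓝 θ₀) (𝓝 0)

namespace Stmt4Aux

abbrev I01 : Set ℝ := Set.Icc (0:ℝ) 1
abbrev vI : Measure ℝ := (volume : Measure ℝ).restrict (Set.Icc (0:ℝ) 1)

lemma base_eq : (volume : Measure (ℝ × ℝ)).restrict (I01 ×ˢ (univ : Set ℝ))
    = vI.prod volume := by
  rw [Measure.volume_eq_prod, ← Measure.prod_restrict, Measure.restrict_univ]

variable {f0 g0 : ℝ → ℝ}

lemma intensity_eq (n : ℕ) (heq : f0 =ᵐ[vI] g0) :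
    intensity n f0 = (vI.prod volume).withDensity
      (fun p => if g0 p.1 ≤ p.2 then (n:ℝ≥0∞) else 0) := by
  rw [intensity, base_eq]
  refine withDensity_congr_ae ?_
  have h1 : (vI.prod volume) {p : ℝ × ℝ | ¬ f0 p.1 = g0 p.1} = 0 := by
    refine measure_mono_null (fun p hp => ?_) (?_ : (vI.prod volume)
      ({x | ¬ f0 x = g0 x} ×ˢ (univ : Set ℝ)) = 0)
    · exact ⟨hp, trivial⟩
    · rw [Measure.prod_prod, ae_iff.mp heq, zero_mul]
  have h2 : ∀ᵐ p ∂(vI.prod volume), f0 p.1 = g0 p.1 := ae_iff.mpr h1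
  filter_upwards [h2] with p hp
  simp [hp]

lemma intensity_apply (n : ℕ) (heq : f0 =ᵐ[vI] g0) {A : Set (ℝ × ℝ)} (hA : MeasurableSet A) :
    intensity n f0 A
      = ∫⁻ p in A, (if g0 p.1 ≤ p.2 then (n:ℝ≥0∞) else 0) ∂(vI.prod volume) := by
  rw [intensity_eq n heq, withDensity_apply _ hA]

lemma intensity_compl_window (n : ℕ) (heq : f0 =ᵐ[vI] g0) :
    intensity n f0 ((I01 ×ˢ (univ : Set ℝ))ᶜ) = 0 := by
  rw [intensity_apply n heq (measurableSet_Icc.prod MeasurableSet.univ).compl]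
  refine setLIntegral_measure_zero _ _ ?_
  rw [← base_eq, Measure.restrict_apply (measurableSet_Icc.prod MeasurableSet.univ).compl,
    compl_inter_self, measure_empty]

lemma intensity_strip (n : ℕ) (heq : f0 =ᵐ[vI] g0) {Ns : Set ℝ}
    (h0 : vI Ns = 0) : intensity n f0 (Ns ×ˢ (univ : Set ℝ)) = 0 := by
  have hNs : vI (toMeasurable vI Ns) = 0 := by rw [measure_toMeasurable]; exact h0
  refine measure_mono_null (fun p hp => ?_) (?_ : intensity n f0
    ((toMeasurable vI Ns) ×ˢ (univ : Set ℝ)) = 0)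
  · exact ⟨subset_toMeasurable _ _ hp.1, trivial⟩
  rw [intensity_apply n heq ((measurableSet_toMeasurable _ _).prod MeasurableSet.univ)]
  refine setLIntegral_measure_zero _ _ ?_
  rw [Measure.prod_prod, hNs, zero_mul]

lemma intensity_below (n : ℕ) (hg0 : Measurable g0) (heq : f0 =ᵐ[vI] g0) :
    intensity n f0 {p : ℝ × ℝ | p.2 < g0 p.1} = 0 := by
  have hA : MeasurableSet {p : ℝ × ℝ | p.2 < g0 p.1} :=
    measurableSet_lt measurable_snd (hg0.comp measurable_fst)
  rw [intensity_apply n heq hA,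
    setLIntegral_congr_fun hA ((fun p hp => by
      simp only [Set.mem_setOf_eq] at hp
      simp [not_le.mpr hp] : ∀ p : ℝ × ℝ, p ∈ {p : ℝ × ℝ | p.2 < g0 p.1} →
        (if g0 p.1 ≤ p.2 then (n:ℝ≥0∞) else 0) = (fun _ => (0:ℝ≥0∞)) p)), lintegral_zero]

lemma ofReal_eq_ofReal_max (t : ℝ) : ENNReal.ofReal t = ENNReal.ofReal (max t 0) := by
  rcases le_total t 0 with ht | ht
  · rw [ENNReal.ofReal_of_nonpos ht, max_eq_right ht, ENNReal.ofReal_zero]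
  · rw [max_eq_left ht]

lemma intensity_notle (n : ℕ) (hg0 : Measurable g0) (heq : f0 =ᵐ[vI] g0)
    {h : ℝ → ℝ} (hh : Measurable h)
    (hint : Integrable (fun x => max (h x - g0 x) 0) vI) :
    intensity n f0 {p : ℝ × ℝ | ¬ h p.1 ≤ p.2}
      = ENNReal.ofReal ((n:ℝ) * ∫ x in I01, max (h x - g0 x) 0) := by
  have hA : MeasurableSet {p : ℝ × ℝ | ¬ h p.1 ≤ p.2} :=
    (measurableSet_le (hh.comp measurable_fst) measurable_snd).compl
  rw [intensity_apply n heq hA, ← lintegral_indicator hA]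
  have hptw : ∀ p : ℝ × ℝ,
      ({p : ℝ × ℝ | ¬ h p.1 ≤ p.2}).indicator
        (fun p => if g0 p.1 ≤ p.2 then (n:ℝ≥0∞) else 0) p
      = (fun q : ℝ × ℝ => if g0 q.1 ≤ q.2 ∧ q.2 < h q.1 then (n:ℝ≥0∞) else 0) p := by
    intro p
    simp only [Set.indicator_apply, Set.mem_setOf_eq]
    by_cases h1 : h p.1 ≤ p.2
    · rw [if_neg (not_not_intro h1), if_neg (fun hc => absurd h1 (not_le.mpr hc.2))]
    · rw [if_pos h1]
      by_cases h2 : g0 p.1 ≤ p.2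
      · rw [if_pos h2, if_pos ⟨h2, not_le.mp h1⟩]
      · rw [if_neg h2, if_neg (fun hc => h2 hc.1)]
  rw [lintegral_congr hptw]
  have hmeas : Measurable (fun q : ℝ × ℝ => if g0 q.1 ≤ q.2 ∧ q.2 < h q.1 then (n:ℝ≥0∞) else 0) := by
    refine Measurable.ite ?_ measurable_const measurable_const
    exact (measurableSet_le (hg0.comp measurable_fst) measurable_snd).inter
      (measurableSet_lt measurable_snd (hh.comp measurable_fst))
  rw [lintegral_prod _ hmeas.aemeasurable]
  have hinner : ∀ x : ℝ, (∫⁻ y, (if g0 x ≤ y ∧ y < h x then (n:ℝ≥0∞) else 0) ∂volume)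
      = (n:ℝ≥0∞) * ENNReal.ofReal (max (h x - g0 x) 0) := by
    intro x
    have : (fun y => if g0 x ≤ y ∧ y < h x then (n:ℝ≥0∞) else 0)
        = (Set.Ico (g0 x) (h x)).indicator (fun _ => (n:ℝ≥0∞)) := by
      funext y; simp [Set.indicator_apply, Set.mem_Ico]
    rw [this, lintegral_indicator measurableSet_Ico, setLIntegral_const, Real.volume_Ico,
      ← ofReal_eq_ofReal_max]
  rw [lintegral_congr hinner, lintegral_const_mul' _ _ (by simp : (n:ℝ≥0∞) ≠ ∞),
    ← ofReal_integral_eq_lintegral_ofReal hint (ae_of_all _ fun x => le_max_right _ _),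
    ENNReal.ofReal_mul (by positivity), ENNReal.ofReal_natCast]

end Stmt4Aux

/-- Proposition 2.4: one-sided contraction from the small ball probability
alone, no entropy condition.
If `Π(f : ∫(f₀ - f) ≤ A εₙ, f ≤ f₀) ≥ e^{-C n εₙ}` for constants `C > 0`, `A ≥ 1`, then
`E_{f₀}[Π(f : ∫(f₀ - f)₊ ≥ (1 + A + C) εₙ | N)] ≤ e^{-n εₙ}`. -/
theorem stmt_4 {Ω Θ : Type*} [MeasurableSpace Ω] [MeasurableSpace Θ] [TopologicalSpace Θ]
    [PolishSpace Θ] [BorelSpace Θ]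
    (P : ℕ → (ℝ → ℝ) → Measure Ω) (pts : Ω → ℕ → ℝ × ℝ)
    (hmodel : IsBoundaryModel P pts)
    (f0 : ℝ → ℝ) (hf0 : IntegrableOn f0 (Set.Icc (0:ℝ) 1))
    (Pi : Measure Θ) (ι : Θ → ℝ → ℝ) (hprior : IsL1Prior Pi ι)
    (C A : ℝ) (hC : 0 < C) (hA : 1 ≤ A) (ε : ℕ → ℝ) (hεpos : ∀ n, 0 < ε n)
    (hsmall : ∀ n : ℕ, ENNReal.ofReal (Real.exp (-C * n * ε n)) ≤
      Pi {θ | intI (fun x => f0 x - ι θ x) ≤ A * ε n ∧ aeLeI (ι θ) f0}) :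
    ∀ n : ℕ,
      ∫⁻ ω, post n pts Pi ι {θ | (1 + A + C) * ε n ≤ intPos f0 (ι θ)} ω ∂(P n f0) ≤
        ENNReal.ofReal (Real.exp (-(n : ℝ) * ε n)) := by
  intro n
  classical
  obtain ⟨hPiprob, hιm, hιint, -⟩ := hprior
  haveI := hPiprob
  obtain ⟨hPprob, hptsm, hvoid⟩ := hmodel n f0 hf0
  haveI := hPprob
  set B : Set Θ := {θ | (1 + A + C) * ε n ≤ intPos f0 (ι θ)} with hBdef
  set S : Set Θ := {θ | intI (fun x => f0 x - ι θ x) ≤ A * ε n ∧ aeLeI (ι θ) f0} with hSdef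
  -- measurable a.e.-version of f0
  set g0 : ℝ → ℝ := (hf0.1.aemeasurable).mk f0 with hg0def
  have hg0m : Measurable g0 := (hf0.1.aemeasurable).measurable_mk
  have heq : f0 =ᵐ[Stmt4Aux.vI] g0 := (hf0.1.aemeasurable).ae_eq_mk
  have hg0int : Integrable g0 Stmt4Aux.vI := hf0.congr heq
  have hιθm : ∀ θ, Measurable (ι θ) := fun θ => hιm.comp measurable_prodMk_left
  have hposθint : ∀ θ, Integrable (fun x => max (ι θ x - g0 x) 0) Stmt4Aux.vI :=
    fun θ => ((hιint θ).sub hg0int).pos_part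
  have hposθint' : ∀ θ, Integrable (fun x => max (g0 x - ι θ x) 0) Stmt4Aux.vI :=
    fun θ => (hg0int.sub (hιint θ)).pos_part
  -- pointwise identities between f0 and g0 integrals
  have hpos_ae : ∀ θ, intPos f0 (ι θ) = ∫ x in Stmt4Aux.I01, max (g0 x - ι θ x) 0 := by
    intro θ
    exact integral_congr_ae (heq.mono fun x hx => by dsimp only; rw [hx])
  have hkey : ∀ θ, (∫ x in Stmt4Aux.I01, ι θ x) - (∫ x in Stmt4Aux.I01, max (ι θ x - g0 x) 0)
      = intI f0 - intPos f0 (ι θ) := by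
    intro θ
    have h0 : intI f0 = ∫ x in Stmt4Aux.I01, g0 x := integral_congr_ae heq
    have h2 : (∫ x in Stmt4Aux.I01, max (ι θ x - g0 x) 0)
        - (∫ x in Stmt4Aux.I01, max (g0 x - ι θ x) 0)
        = (∫ x in Stmt4Aux.I01, ι θ x) - ∫ x in Stmt4Aux.I01, g0 x := by
      rw [← integral_sub (hposθint θ) (hposθint' θ), ← integral_sub (hιint θ) hg0int]
      refine integral_congr_ae (ae_of_all _ fun x => ?_)
      rcases le_total (ι θ x) (g0 x) with h | h
      · dsimp only; rw [max_eq_right (by linarith), max_eq_left (by linarith)]; ring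
      · dsimp only; rw [max_eq_left (by linarith), max_eq_right (by linarith)]; ring
    rw [h0, hpos_ae θ]; linarith
  -- measurability toolkit
  have hintIm : Measurable fun θ => ∫ x in Stmt4Aux.I01, ι θ x :=
    hιm.stronglyMeasurable.integral_prod_right'.measurable
  have hposm : Measurable fun θ => ∫ x in Stmt4Aux.I01, max (g0 x - ι θ x) 0 := by
    have hsm : StronglyMeasurable fun p : Θ × ℝ => max (g0 p.2 - Function.uncurry ι p) 0 :=
      (((hg0m.comp measurable_snd).sub hιm).max measurable_const).stronglyMeasurable
    exact hsm.integral_prod_right'.measurable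
  have hBm : MeasurableSet B := by
    have hB' : B = (fun θ => ∫ x in Stmt4Aux.I01, max (g0 x - ι θ x) 0) ⁻¹'
        (Set.Ici ((1 + A + C) * ε n)) := by
      ext θ
      simp only [hBdef, Set.mem_setOf_eq, Set.mem_preimage, Set.mem_Ici, hpos_ae θ]
    rw [hB']
    exact hposm measurableSet_Ici
  have hGm : Measurable fun θ => ∫ x in Stmt4Aux.I01, (g0 x - ι θ x) := by
    have hsm : StronglyMeasurable fun p : Θ × ℝ => g0 p.2 - Function.uncurry ι p :=
      ((hg0m.comp measurable_snd).sub hιm).stronglyMeasurable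
    exact hsm.integral_prod_right'.measurable
  have hGeq : ∀ θ, intI (fun x => f0 x - ι θ x) = ∫ x in Stmt4Aux.I01, (g0 x - ι θ x) :=
    fun θ => integral_congr_ae (heq.mono fun x hx => by dsimp only; rw [hx])
  have hSae : ∀ θ, aeLeI (ι θ) f0 ↔ Stmt4Aux.vI {x | g0 x < ι θ x} = 0 := by
    intro θ
    have hsetEq : {x | g0 x < ι θ x} = {x | ¬ ι θ x ≤ g0 x} := by ext x; simp [not_le]
    constructor
    · intro h
      have h' : ∀ᵐ x ∂Stmt4Aux.vI, ι θ x ≤ g0 x := by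
        filter_upwards [h, heq] with x h1 h2; rw [← h2]; exact h1
      rw [hsetEq]; exact ae_iff.mp h'
    · intro h
      have h' : ∀ᵐ x ∂Stmt4Aux.vI, ι θ x ≤ g0 x := ae_iff.mpr (by rw [← hsetEq]; exact h)
      filter_upwards [h', heq] with x h1 h2; rw [h2]; exact h1
  have hSm : MeasurableSet S := by
    have hS' : S = {θ | (∫ x in Stmt4Aux.I01, (g0 x - ι θ x)) ≤ A * ε n}
        ∩ {θ | Stmt4Aux.vI {x | g0 x < ι θ x} = 0} := by
      ext θ
      simp only [hSdef, Set.mem_setOf_eq, Set.mem_inter_iff, hGeq θ, hSae θ]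
    have hFm : Measurable fun θ => Stmt4Aux.vI {x | g0 x < ι θ x} := by
      have h1 : ∀ θ, Stmt4Aux.vI {x | g0 x < ι θ x}
          = ∫⁻ x, (if g0 x < ι θ x then 1 else 0) ∂Stmt4Aux.vI := by
        intro θ
        rw [← lintegral_indicator_one (measurableSet_lt hg0m (hιθm θ))]
        refine lintegral_congr fun x => ?_
        simp [Set.indicator_apply]
      simp_rw [h1]
      refine Measurable.lintegral_prod_right ?_
      exact Measurable.ite (measurableSet_lt (hg0m.comp measurable_snd) hιm)
        measurable_const measurable_const
    rw [hS']
    exact (measurableSet_le hGm measurable_const).inter (hFm (measurableSet_singleton 0))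
  -- joint measurability of the likelihood
  have hLset : MeasurableSet {q : Ω × Θ | ∀ i, ι q.2 (pts q.1 i).1 ≤ (pts q.1 i).2} := by
    have : {q : Ω × Θ | ∀ i, ι q.2 (pts q.1 i).1 ≤ (pts q.1 i).2}
        = ⋂ i, {q : Ω × Θ | ι q.2 (pts q.1 i).1 ≤ (pts q.1 i).2} := by
      ext q; simp
    rw [this]
    refine MeasurableSet.iInter fun i => ?_
    have hp : Measurable fun q : Ω × Θ => pts q.1 i := (hptsm i).comp measurable_fst
    exact measurableSet_le (hιm.comp (measurable_snd.prodMk hp.fst)) hp.snd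
  have hLm : Measurable fun q : Ω × Θ => lik n pts (ι q.2) q.1 := by
    have hfun : (fun q : Ω × Θ => lik n pts (ι q.2) q.1)
        = fun q => if q ∈ {q : Ω × Θ | ∀ i, ι q.2 (pts q.1 i).1 ≤ (pts q.1 i).2}
            then ENNReal.ofReal (Real.exp (n * intI (ι q.2))) else 0 := by
      funext q
      simp only [lik, Set.indicator_apply, Set.mem_setOf_eq]
    rw [hfun]
    refine Measurable.ite hLset ?_ measurable_const
    exact (ENNReal.measurable_ofReal.comp
      (Real.measurable_exp.comp (hintIm.const_mul (n:ℝ)))).comp measurable_snd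
  -- per-θ events are measurable
  have hsetθm : ∀ θ, MeasurableSet {ω | ∀ i, ι θ (pts ω i).1 ≤ (pts ω i).2} := by
    intro θ
    have : {ω | ∀ i, ι θ (pts ω i).1 ≤ (pts ω i).2}
        = ⋂ i, {ω | ι θ (pts ω i).1 ≤ (pts ω i).2} := by ext ω; simp
    rw [this]
    exact MeasurableSet.iInter fun i =>
      measurableSet_le ((hιθm θ).comp (hptsm i).fst) (hptsm i).snd
  -- expected likelihood for a fixed θ
  have hExpLik : ∀ θ, ∫⁻ ω, lik n pts (ι θ) ω ∂(P n f0)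
      = ENNReal.ofReal (Real.exp ((n:ℝ) * intI f0 - n * intPos f0 (ι θ))) := by
    intro θ
    have hAm : MeasurableSet {p : ℝ × ℝ | ¬ ι θ p.1 ≤ p.2} :=
      (measurableSet_le ((hιθm θ).comp measurable_fst) measurable_snd).compl
    have hset : {ω | ∀ i, ι θ (pts ω i).1 ≤ (pts ω i).2}
        = {ω | ∀ i, pts ω i ∉ {p : ℝ × ℝ | ¬ ι θ p.1 ≤ p.2}} := by
      ext ω; simp [not_not]
    have hμA := Stmt4Aux.intensity_notle n hg0m heq (hιθm θ) (hposθint θ)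
    have hInn : 0 ≤ (n:ℝ) * ∫ x in Stmt4Aux.I01, max (ι θ x - g0 x) 0 :=
      mul_nonneg n.cast_nonneg (integral_nonneg fun x => le_max_right _ _)
    have hvoidθ : (P n f0) {ω | ∀ i, ι θ (pts ω i).1 ≤ (pts ω i).2}
        = ENNReal.ofReal (Real.exp (-((n:ℝ) * ∫ x in Stmt4Aux.I01, max (ι θ x - g0 x) 0))) := by
      rw [hset, hvoid _ hAm, hμA, if_neg ENNReal.ofReal_ne_top, ENNReal.toReal_ofReal hInn]
    have hlik : (fun ω => lik n pts (ι θ) ω)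
        = fun ω => ({ω' : Ω | ∀ i, ι θ (pts ω' i).1 ≤ (pts ω' i).2}).indicator
            (fun _ => ENNReal.ofReal (Real.exp ((n:ℝ) * intI (ι θ)))) ω := rfl
    rw [hlik, lintegral_indicator (hsetθm θ), setLIntegral_const, hvoidθ,
      ← ENNReal.ofReal_mul (exp_nonneg _), ← Real.exp_add]
    congr 1
    have h2 : (n:ℝ) * intI (ι θ) + -((n:ℝ) * ∫ x in Stmt4Aux.I01, max (ι θ x - g0 x) 0)
        = (n:ℝ) * ((∫ x in Stmt4Aux.I01, ι θ x) - ∫ x in Stmt4Aux.I01, max (ι θ x - g0 x) 0) := by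
      simp only [intI]; ring
    rw [h2, hkey θ]; ring
  -- numerator bound
  set Mnum : ℝ≥0∞ := ENNReal.ofReal (Real.exp ((n:ℝ) * intI f0 - n * ((1 + A + C) * ε n)))
    with hMdef
  have hNum : ∫⁻ ω, (∫⁻ θ in B, lik n pts (ι θ) ω ∂Pi) ∂(P n f0) ≤ Mnum := by
    rw [lintegral_lintegral_swap (μ := P n f0) (ν := Pi.restrict B)
      (f := fun ω θ => lik n pts (ι θ) ω) hLm.aemeasurable]
    calc ∫⁻ θ in B, ∫⁻ ω, lik n pts (ι θ) ω ∂(P n f0) ∂Pi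
        ≤ ∫⁻ _ in B, Mnum ∂Pi := by
          refine setLIntegral_mono' hBm fun θ hθ => ?_
          rw [hExpLik θ]
          refine ENNReal.ofReal_le_ofReal (Real.exp_le_exp.mpr ?_)
          have hθ' : (1 + A + C) * ε n ≤ intPos f0 (ι θ) := hθ
          nlinarith [(n.cast_nonneg : (0:ℝ) ≤ n)]
      _ = Mnum * Pi B := setLIntegral_const _ _
      _ ≤ Mnum * 1 := mul_le_mul_right prob_le_one _
      _ = Mnum := mul_one _
  -- probability-one events from null intensity sets
  have hone : ∀ A' : Set (ℝ × ℝ), MeasurableSet A' → intensity n f0 A' = 0 →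
      (P n f0) {ω | ∀ i, pts ω i ∉ A'} = 1 := by
    intro A' hA' h0
    rw [hvoid A' hA', h0]
    norm_num
  -- the joint bad set is null
  set J : Set (Ω × Θ) := {q | q.2 ∈ S ∧ ¬ ∀ i, ι q.2 (pts q.1 i).1 ≤ (pts q.1 i).2} with hJdef
  have hJm : MeasurableSet J := (hSm.preimage measurable_snd).inter hLset.compl
  have hJ0 : ((P n f0).prod Pi) J = 0 := by
    rw [Measure.prod_apply_symm hJm]
    have hz : ∀ θ, (P n f0) ((fun ω => (ω, θ)) ⁻¹' J) = 0 := by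
      intro θ
      by_cases hθS : θ ∈ S
      · set Nθ : Set ℝ := Stmt4Aux.I01 ∩ {x | g0 x < ι θ x} with hNθdef
        have hNm : MeasurableSet Nθ :=
          measurableSet_Icc.inter (measurableSet_lt hg0m (hιθm θ))
        have hN0 : Stmt4Aux.vI Nθ = 0 :=
          measure_mono_null inter_subset_right ((hSae θ).mp hθS.2)
        set Abad : Set (ℝ × ℝ) := ((Stmt4Aux.I01 ×ˢ (univ : Set ℝ))ᶜ
          ∪ {p : ℝ × ℝ | p.2 < g0 p.1}) ∪ (Nθ ×ˢ (univ : Set ℝ)) with hAbaddef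
        have hAbadm : MeasurableSet Abad :=
          (((measurableSet_Icc.prod MeasurableSet.univ).compl).union
            (measurableSet_lt measurable_snd (hg0m.comp measurable_fst))).union
            (hNm.prod MeasurableSet.univ)
        have hAbad0 : intensity n f0 Abad = 0 := by
          refine measure_union_null (measure_union_null ?_ ?_) ?_
          · exact Stmt4Aux.intensity_compl_window n heq
          · exact Stmt4Aux.intensity_below n hg0m heq
          · exact Stmt4Aux.intensity_strip n heq hN0
        have hgoodm : MeasurableSet {ω | ∀ i, pts ω i ∉ Abad} := by
          have : {ω | ∀ i, pts ω i ∉ Abad} = ⋂ i, (fun ω => pts ω i) ⁻¹' Abadᶜ := by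
            ext ω; simp
          rw [this]
          exact MeasurableSet.iInter fun i => (hptsm i) hAbadm.compl
        have h1 : (P n f0) {ω | ∀ i, pts ω i ∉ Abad} = 1 := hone Abad hAbadm hAbad0
        have hsub : ((fun ω => (ω, θ)) ⁻¹' J) ⊆ {ω | ∀ i, pts ω i ∉ Abad}ᶜ := by
          intro ω hω
          simp only [Set.mem_preimage, hJdef, Set.mem_setOf_eq] at hω
          intro hgood
          refine hω.2 fun i => ?_
          have h := hgood i
          rw [hAbaddef] at h
          have h1' : pts ω i ∈ Stmt4Aux.I01 ×ˢ (univ : Set ℝ) := by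
            by_contra hc
            exact h (Set.mem_union_left _ (Set.mem_union_left _ hc))
          have h2' : ¬ (pts ω i).2 < g0 (pts ω i).1 :=
            fun hc => h (Set.mem_union_left _ (Set.mem_union_right _ hc))
          have h3' : ι θ (pts ω i).1 ≤ g0 (pts ω i).1 := by
            by_contra hc
            exact h (Set.mem_union_right _ ⟨⟨h1'.1, not_le.mp hc⟩, trivial⟩)
          exact le_trans h3' (not_lt.mp h2')
        refine measure_mono_null hsub ?_
        rw [prob_compl_eq_zero_iff hgoodm]
        exact h1
      · have : ((fun ω => (ω, θ)) ⁻¹' J) = ∅ := by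
          ext ω; simp [hJdef, hθS]
        rw [this, measure_empty]
    rw [lintegral_congr hz, lintegral_zero]
  -- a.e. lower bound for the denominator
  set cden : ℝ≥0∞ := ENNReal.ofReal
    (Real.exp (((n:ℝ) * intI f0 - n * (A * ε n)) + (-C * n * ε n))) with hcdendef
  have hden : ∀ᵐ ω ∂(P n f0), cden ≤ ∫⁻ θ, lik n pts (ι θ) ω ∂Pi := by
    have hae := (Measure.measure_prod_null hJm).mp hJ0
    filter_upwards [hae] with ω hω
    set T : Set Θ := Prod.mk ω ⁻¹' J with hTdef
    have hTm : MeasurableSet T := hJm.preimage measurable_prodMk_left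
    calc cden = ENNReal.ofReal (Real.exp ((n:ℝ) * intI f0 - n * (A * ε n)))
          * ENNReal.ofReal (Real.exp (-C * n * ε n)) := by
          rw [hcdendef, ← ENNReal.ofReal_mul (exp_nonneg _), ← Real.exp_add]
      _ ≤ ENNReal.ofReal (Real.exp ((n:ℝ) * intI f0 - n * (A * ε n))) * Pi S :=
          mul_le_mul_right (hsmall n) _
      _ = ENNReal.ofReal (Real.exp ((n:ℝ) * intI f0 - n * (A * ε n))) * Pi (S \ T) := by
          rw [measure_diff_null' (measure_mono_null inter_subset_right hω)]
      _ = ∫⁻ _ in S \ T, ENNReal.ofReal (Real.exp ((n:ℝ) * intI f0 - n * (A * ε n))) ∂Pi :=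
          (setLIntegral_const _ _).symm
      _ ≤ ∫⁻ θ in S \ T, lik n pts (ι θ) ω ∂Pi := by
          refine setLIntegral_mono' (hSm.diff hTm) fun θ hθ => ?_
          have hall : ∀ i, ι θ (pts ω i).1 ≤ (pts ω i).2 := by
            by_contra hc
            exact hθ.2 ⟨hθ.1, hc⟩
          have hlikval : lik n pts (ι θ) ω = ENNReal.ofReal (Real.exp ((n:ℝ) * intI (ι θ))) :=
            Set.indicator_of_mem
              (show ω ∈ {ω' : Ω | ∀ i, ι θ (pts ω' i).1 ≤ (pts ω' i).2} from hall) _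
          rw [hlikval]
          refine ENNReal.ofReal_le_ofReal (Real.exp_le_exp.mpr ?_)
          have hS1 : intI (fun x => f0 x - ι θ x) ≤ A * ε n := hθ.1.1
          have hsub' : intI (fun x => f0 x - ι θ x) = intI f0 - intI (ι θ) := by
            simp only [intI]
            exact integral_sub hf0 (hιint θ)
          rw [hsub'] at hS1
          nlinarith [(n.cast_nonneg : (0:ℝ) ≤ n)]
      _ ≤ ∫⁻ θ, lik n pts (ι θ) ω ∂Pi := setLIntegral_le_lintegral _ _
  -- conclusion
  have hcden0 : cden ≠ 0 := by
    simp [hcdendef, Real.exp_pos]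
  calc ∫⁻ ω, post n pts Pi ι B ω ∂(P n f0)
      ≤ ∫⁻ ω, (∫⁻ θ in B, lik n pts (ι θ) ω ∂Pi) / cden ∂(P n f0) := by
        refine lintegral_mono_ae ?_
        filter_upwards [hden] with ω hω
        exact ENNReal.div_le_div le_rfl hω
    _ = (∫⁻ ω, (∫⁻ θ in B, lik n pts (ι θ) ω ∂Pi) ∂(P n f0)) * cden⁻¹ := by
        simp_rw [div_eq_mul_inv]
        exact lintegral_mul_const' _ _ (ENNReal.inv_ne_top.mpr hcden0)
    _ ≤ Mnum * cden⁻¹ := mul_le_mul_left hNum _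
    _ = Mnum / cden := (div_eq_mul_inv _ _).symm
    _ ≤ ENNReal.ofReal (Real.exp (-(n : ℝ) * ε n)) := by
        rw [hMdef, hcdendef, ← ENNReal.ofReal_div_of_pos (Real.exp_pos _), ← Real.exp_sub]
        refine ENNReal.ofReal_le_ofReal (Real.exp_le_exp.mpr (le_of_eq ?_))
        ring

end
end

section
/- Let $f_0\in L^1([0,1])$ and let $\Pi$ be a prior on a Polish space $\Theta$ embedding continuously into $L^1([0,1])$ with $\Pi(f: f\le f_0)>0$. Then for every Borel set $B\subseteq\Theta$, $E_{f_0}\big[\Pi(f\in B\mid N)\big]\le S_[(n,B,f_0)$. In particular the bound does not depend on the prior $\Pi$. -/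
open MeasureTheory Real Set Filter
open scoped ENNReal NNReal Topology

noncomputable section

/-- The `ε`-covering number of a class `F` of functions with respect to the supremum norm
on `[0,1]` (with measurable centres). -/
def supCover (ε : ℝ) (F : Set (ℝ → ℝ)) : ℕ∞ :=
  ⨅ (G : Finset (ℝ → ℝ)) (_ : (∀ g ∈ G, Measurable g) ∧
      ∀ f ∈ F, ∃ g ∈ G, ∀ x ∈ Set.Icc (0:ℝ) 1, |f x - g x| ≤ ε),
    (G.card : ℕ∞)

/-- The one-sided bracketing number `N_[(δ, F)`: the smallest number of functions
`ℓ₁, …, ℓ_M ∈ L¹([0,1])` such that every `f ∈ F` admits some `j` with `ℓ_j ≤ f` and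
`∫ (f - ℓ_j) ≤ δ`. -/
def bracketNum (δ : ℝ) (F : Set (ℝ → ℝ)) : ℕ∞ :=
  ⨅ (G : Finset (ℝ → ℝ)) (_ : (∀ l ∈ G, IntegrableOn l (Set.Icc (0:ℝ) 1)) ∧
      ∀ f ∈ F, ∃ l ∈ G, aeLeI l f ∧ intI (fun x => f x - l x) ≤ δ),
    (G.card : ℕ∞)

/-- The separation quantity `S_[(n, F, f₀) = inf_{(ℓ_j)_{j ∈ J}} Σ_{j ∈ J} e^{-n ∫ (ℓ_j - f₀)₊}`,
the infimum over countable families `(ℓ_j)_{j ∈ J} ⊆ L¹([0,1])` such that every `f ∈ F`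
admits some `j ∈ J` with `ℓ_j ≤ f`. -/
def sepQ (n : ℕ) (F : Set (ℝ → ℝ)) (f0 : ℝ → ℝ) : ℝ≥0∞ :=
  ⨅ (l : ℕ → ℝ → ℝ) (J : Set ℕ)
    (_ : (∀ j ∈ J, IntegrableOn (l j) (Set.Icc (0:ℝ) 1)) ∧ ∀ f ∈ F, ∃ j ∈ J, aeLeI (l j) f),
    ∑' j : J, ENNReal.ofReal (Real.exp (-(n : ℝ) * intPos (l (j : ℕ)) f0))
/-- Proposition 2.5: posterior bound by the separation quantity.
If `Π(f : f ≤ f₀) > 0`, then for every Borel set `B ⊆ Θ`,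
`E_{f₀}[Π(f ∈ B | N)] ≤ S_[(n, B, f₀)`; the bound does not depend on the prior. -/
theorem stmt_5 {Ω Θ : Type*} [MeasurableSpace Ω] [MeasurableSpace Θ] [TopologicalSpace Θ]
    [PolishSpace Θ] [BorelSpace Θ] (n : ℕ) (hn : 1 ≤ n)
    (P : ℕ → (ℝ → ℝ) → Measure Ω) (pts : Ω → ℕ → ℝ × ℝ)
    (hmodel : IsBoundaryModel P pts)
    (f0 : ℝ → ℝ) (hf0 : IntegrableOn f0 (Set.Icc (0:ℝ) 1))
    (Pi : Measure Θ) (ι : Θ → ℝ → ℝ) (hprior : IsL1Prior Pi ι)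
    (hpos : 0 < Pi {θ | aeLeI (ι θ) f0})
    (B : Set Θ) (hB : MeasurableSet B) :
    ∫⁻ ω, post n pts Pi ι B ω ∂(P n f0) ≤ sepQ n (ι '' B) f0 := by
  classical
  obtain ⟨hPiProb, hιMeas, hιInt, -⟩ := hprior
  obtain ⟨hPprob, hpts, hvoid⟩ := hmodel n f0 hf0
  haveI := hPprob
  haveI := hPiProb
  set Pn := P n f0 with hPn
  -- a.e. there are no points in an intensity-null measurable set
  have hnull : ∀ A : Set (ℝ × ℝ), MeasurableSet A → intensity n f0 A = 0 →
      ∀ᵐ ω ∂Pn, ∀ i, pts ω i ∉ A := by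
    intro A hA hA0
    have hms : MeasurableSet {ω | ∀ i, pts ω i ∉ A} := by
      rw [Set.setOf_forall]
      exact MeasurableSet.iInter fun i => (hpts i) hA.compl
    have h1 : Pn {ω | ∀ i, pts ω i ∉ A} = 1 := by
      rw [hvoid A hA, hA0, if_neg ENNReal.zero_ne_top]
      simp
    have h0 : Pn ({ω | ∀ i, pts ω i ∉ A}ᶜ) = 0 := (prob_compl_eq_zero_iff hms).2 h1
    rw [ae_iff]
    rwa [Set.compl_setOf] at h0
  -- the intensity is dominated by n times restricted Lebesgue measure
  have hIntLe : ∀ A : Set (ℝ × ℝ), MeasurableSet A →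
      intensity n f0 A ≤ (n : ℝ≥0∞) *
        ((volume : Measure (ℝ × ℝ)).restrict (Set.Icc (0:ℝ) 1 ×ˢ (Set.univ : Set ℝ))) A := by
    intro A hA
    rw [intensity, withDensity_apply _ hA]
    calc ∫⁻ p in A, (if f0 p.1 ≤ p.2 then (n : ℝ≥0∞) else 0)
          ∂((volume : Measure (ℝ × ℝ)).restrict (Set.Icc (0:ℝ) 1 ×ˢ (Set.univ : Set ℝ)))
        ≤ ∫⁻ _ in A, (n : ℝ≥0∞)
          ∂((volume : Measure (ℝ × ℝ)).restrict (Set.Icc (0:ℝ) 1 ×ˢ (Set.univ : Set ℝ))) :=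
          lintegral_mono fun p => by split <;> simp
      _ = _ := setLIntegral_const _ _
  -- vertical sets over Lebesgue-null subsets of [0,1] are intensity-null
  have hvert : ∀ s : Set ℝ, MeasurableSet s → volume (s ∩ Set.Icc (0:ℝ) 1) = 0 →
      intensity n f0 (s ×ˢ (Set.univ : Set ℝ)) = 0 := by
    intro s hs hs0
    refine le_antisymm ?_ zero_le
    refine le_trans (hIntLe _ (hs.prod MeasurableSet.univ)) ?_
    rw [Measure.restrict_apply (hs.prod MeasurableSet.univ), Set.prod_inter_prod,
      Set.univ_inter, Measure.volume_eq_prod, Measure.prod_prod, hs0, zero_mul, mul_zero]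
  -- measurable version of f0
  have hf0m : AEStronglyMeasurable f0 ((volume : Measure ℝ).restrict (Set.Icc (0:ℝ) 1)) :=
    hf0.aestronglyMeasurable
  set f0' : ℝ → ℝ := hf0m.mk f0 with hf0'def
  have hf0'meas : Measurable f0' := hf0m.stronglyMeasurable_mk.measurable
  have hf0'ae : f0 =ᵐ[(volume : Measure ℝ).restrict (Set.Icc (0:ℝ) 1)] f0' := hf0m.ae_eq_mk
  have hf0'int : Integrable f0' ((volume : Measure ℝ).restrict (Set.Icc (0:ℝ) 1)) :=
    hf0.congr hf0'ae
  -- the restricted Lebesgue measure on the strip as a product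
  have hν : ((volume : Measure (ℝ × ℝ)).restrict (Set.Icc (0:ℝ) 1 ×ˢ (Set.univ : Set ℝ)))
      = ((volume : Measure ℝ).restrict (Set.Icc (0:ℝ) 1)).prod (volume : Measure ℝ) := by
    rw [Measure.volume_eq_prod, ← Measure.prod_restrict, Measure.restrict_univ]
  -- unfold sepQ
  rw [sepQ]
  refine le_iInf fun l => le_iInf fun J => le_iInf fun hlJ => ?_
  obtain ⟨hlInt, hlcov⟩ := hlJ
  -- measurable versions of the l j
  set l' : ℕ → ℝ → ℝ := fun j =>
    if h : AEStronglyMeasurable (l j) ((volume : Measure ℝ).restrict (Set.Icc (0:ℝ) 1)) then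
      h.mk (l j) else fun _ => 0 with hl'def
  have hl'meas : ∀ j, Measurable (l' j) := by
    intro j
    by_cases h : AEStronglyMeasurable (l j) ((volume : Measure ℝ).restrict (Set.Icc (0:ℝ) 1))
    · simp only [hl'def, dif_pos h]
      exact h.stronglyMeasurable_mk.measurable
    · simp only [hl'def, dif_neg h]
      exact measurable_const
  have hl'ae : ∀ j ∈ J, l j =ᵐ[(volume : Measure ℝ).restrict (Set.Icc (0:ℝ) 1)] l' j := by
    intro j hj
    have h := (hlInt j hj).aestronglyMeasurable
    simp only [hl'def, dif_pos h]
    exact h.ae_eq_mk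
  have hl'int : ∀ j ∈ J, Integrable (l' j) ((volume : Measure ℝ).restrict (Set.Icc (0:ℝ) 1)) :=
    fun j hj => (hlInt j hj).congr (hl'ae j hj)
  -- the events E j and their union
  set E : ℕ → Set Ω := fun j => ⋂ i, {ω | l' j (pts ω i).1 ≤ (pts ω i).2} with hEdef
  have hEmeas : ∀ j, MeasurableSet (E j) := fun j =>
    MeasurableSet.iInter fun i =>
      measurableSet_le ((hl'meas j).comp ((hpts i).fst)) ((hpts i).snd)
  set U : Set Ω := ⋃ j : J, E j with hUdef
  have hUmeas : MeasurableSet U := MeasurableSet.iUnion fun j => hEmeas j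
  -- the joint event set
  set Sev : Set (Θ × Ω) := {q | ∀ i, ι q.1 (pts q.2 i).1 ≤ (pts q.2 i).2} with hSevdef
  have hSevMeas : MeasurableSet Sev := by
    rw [hSevdef, Set.setOf_forall]
    refine MeasurableSet.iInter fun i => ?_
    exact measurableSet_le
      (hιMeas.comp (measurable_fst.prodMk (((hpts i).comp measurable_snd).fst)))
      (((hpts i).comp measurable_snd).snd)
  -- key per-θ a.e. statement
  have hkey : ∀ᵐ θ ∂Pi.restrict B, ∀ᵐ ω ∂Pn, ((θ, ω) ∈ Sev → ω ∈ U) := by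
    filter_upwards [ae_restrict_mem hB] with θ hθ
    obtain ⟨j, hjJ, hjle⟩ := hlcov (ι θ) ⟨θ, hθ, rfl⟩
    have hιθmeas : Measurable (ι θ) := hιMeas.comp measurable_prodMk_left
    set M : Set ℝ := Set.Icc (0:ℝ) 1 ∩ {x | l' j x ≤ ι θ x} with hMdef
    have hMmeas : MeasurableSet M :=
      measurableSet_Icc.inter (measurableSet_le (hl'meas j) hιθmeas)
    have hbad : volume (Mᶜ ∩ Set.Icc (0:ℝ) 1) = 0 := by
      have h1 : ∀ᵐ x ∂((volume : Measure ℝ).restrict (Set.Icc (0:ℝ) 1)), l' j x ≤ ι θ x := by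
        filter_upwards [hjle, hl'ae j hjJ] with x h1 h2
        rw [← h2]; exact h1
      have h2 : ((volume : Measure ℝ).restrict (Set.Icc (0:ℝ) 1)) {x | ¬ l' j x ≤ ι θ x} = 0 :=
        ae_iff.1 h1
      rw [Measure.restrict_apply' measurableSet_Icc] at h2
      have h3 : Mᶜ ∩ Set.Icc (0:ℝ) 1 = {x | ¬ l' j x ≤ ι θ x} ∩ Set.Icc (0:ℝ) 1 := by
        ext x
        simp only [hMdef, Set.mem_inter_iff, Set.mem_compl_iff, Set.mem_setOf_eq]
        tauto
      rw [h3]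
      exact h2
    have h4 : intensity n f0 (Mᶜ ×ˢ (Set.univ : Set ℝ)) = 0 := hvert Mᶜ hMmeas.compl hbad
    filter_upwards [hnull _ (hMmeas.compl.prod MeasurableSet.univ) h4] with ω hω hSev
    refine Set.mem_iUnion.2 ⟨⟨j, hjJ⟩, Set.mem_iInter.2 fun i => ?_⟩
    have h5 : (pts ω i).1 ∈ M := by
      have := hω i
      simpa [Set.mem_prod] using this
    exact le_trans h5.2 (hSev i)
  -- swap the order of a.e. quantifiers
  have hswap : ∀ᵐ ω ∂Pn, ∀ᵐ θ ∂Pi.restrict B, ((θ, ω) ∈ Sev → ω ∈ U) := by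
    have hms : MeasurableSet {q : Θ × Ω | ((q.1, q.2) ∈ Sev → q.2 ∈ U)} := by
      have heq : {q : Θ × Ω | ((q.1, q.2) ∈ Sev → q.2 ∈ U)}
          = Sevᶜ ∪ (Prod.snd ⁻¹' U) := by
        ext q
        simp [imp_iff_not_or]
      rw [heq]
      exact hSevMeas.compl.union (measurable_snd hUmeas)
    exact (Measure.ae_ae_comm hms).1 hkey
  -- the a.e. pointwise bound on the posterior
  have hmain : ∀ᵐ ω ∂Pn, post n pts Pi ι B ω ≤ U.indicator (fun _ => (1 : ℝ≥0∞)) ω := by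
    filter_upwards [hswap] with ω hω
    by_cases hU : ω ∈ U
    · rw [Set.indicator_of_mem hU]
      calc post n pts Pi ι B ω
          = (∫⁻ θ in B, lik n pts (ι θ) ω ∂Pi) / ∫⁻ θ, lik n pts (ι θ) ω ∂Pi := rfl
        _ ≤ (∫⁻ θ, lik n pts (ι θ) ω ∂Pi) / ∫⁻ θ, lik n pts (ι θ) ω ∂Pi :=
            ENNReal.div_le_div_right (setLIntegral_le_lintegral _ _) _
        _ ≤ 1 := ENNReal.div_self_le_one
    · rw [Set.indicator_of_notMem hU]
      have hnum : ∫⁻ θ in B, lik n pts (ι θ) ω ∂Pi = 0 := by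
        have hz : ∀ᵐ θ ∂Pi.restrict B, lik n pts (ι θ) ω = 0 := by
          filter_upwards [hω] with θ hθ
          rw [lik, Set.indicator_of_notMem]
          intro hmem
          exact hU (hθ hmem)
        rw [lintegral_congr_ae hz, lintegral_zero]
      rw [post, hnum, ENNReal.zero_div]
  -- void probability of each E j
  have hPE : ∀ j ∈ J, Pn (E j) = ENNReal.ofReal (Real.exp (-(n : ℝ) * intPos (l j) f0)) := by
    intro j hj
    set A : Set (ℝ × ℝ) := {p | p.2 < l' j p.1} with hAdef
    have hAmeas : MeasurableSet A :=
      measurableSet_lt measurable_snd ((hl'meas j).comp measurable_fst)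
    have hEeq : E j = {ω | ∀ i, pts ω i ∉ A} := by
      ext ω
      simp [hEdef, hAdef, not_lt]
    -- intensity of A
    have hofmax : ∀ t : ℝ, ENNReal.ofReal t = ENNReal.ofReal (max t 0) := by
      intro t
      rcases le_total t 0 with h | h
      · rw [max_eq_right h, ENNReal.ofReal_of_nonpos h, ENNReal.ofReal_zero]
      · rw [max_eq_left h]
    have hposint : Integrable (fun x => max (l' j x - f0' x) 0)
        ((volume : Measure ℝ).restrict (Set.Icc (0:ℝ) 1)) :=
      ((hl'int j hj).sub hf0'int).pos_part
    have hμA : intensity n f0 A = (n : ℝ≥0∞) * ENNReal.ofReal (intPos (l j) f0) := by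
      set dens' : ℝ × ℝ → ℝ≥0∞ := fun p => if f0' p.1 ≤ p.2 then (n : ℝ≥0∞) else 0
        with hdens'def
      have hdens'meas : Measurable dens' :=
        Measurable.ite (measurableSet_le (hf0'meas.comp measurable_fst) measurable_snd)
          measurable_const measurable_const
      have hdens : (fun p : ℝ × ℝ => if f0 p.1 ≤ p.2 then (n : ℝ≥0∞) else 0)
          =ᵐ[(volume : Measure (ℝ × ℝ)).restrict (Set.Icc (0:ℝ) 1 ×ˢ (Set.univ : Set ℝ))]
          dens' := by
        obtain ⟨t, hsub, htm, ht0⟩ := exists_measurable_superset_of_null (ae_iff.1 hf0'ae)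
        have htnull : (((volume : Measure ℝ).restrict (Set.Icc (0:ℝ) 1)).prod
            (volume : Measure ℝ)) (t ×ˢ (Set.univ : Set ℝ)) = 0 := by
          rw [Measure.prod_prod, ht0, zero_mul]
        rw [EventuallyEq, ae_iff, hν]
        refine measure_mono_null (fun p hp => ?_) htnull
        simp only [Set.mem_setOf_eq] at hp
        refine Set.mem_prod.2 ⟨hsub ?_, Set.mem_univ _⟩
        intro heq
        apply hp
        simp only [hdens'def, heq]
      calc intensity n f0 A
          = (((volume : Measure (ℝ × ℝ)).restrict
              (Set.Icc (0:ℝ) 1 ×ˢ (Set.univ : Set ℝ))).withDensity dens') A := by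
            rw [intensity, withDensity_congr_ae hdens]
        _ = ∫⁻ p in A, dens' p
            ∂(((volume : Measure ℝ).restrict (Set.Icc (0:ℝ) 1)).prod (volume : Measure ℝ)) := by
            rw [withDensity_apply _ hAmeas, hν]
        _ = ∫⁻ p, A.indicator dens' p
            ∂(((volume : Measure ℝ).restrict (Set.Icc (0:ℝ) 1)).prod (volume : Measure ℝ)) :=
            (lintegral_indicator hAmeas _).symm
        _ = ∫⁻ x, ∫⁻ y, A.indicator dens' (x, y) ∂(volume : Measure ℝ)
            ∂((volume : Measure ℝ).restrict (Set.Icc (0:ℝ) 1)) :=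
            lintegral_prod _ ((hdens'meas.indicator hAmeas).aemeasurable)
        _ = ∫⁻ x, (n : ℝ≥0∞) * ENNReal.ofReal (max (l' j x - f0' x) 0)
            ∂((volume : Measure ℝ).restrict (Set.Icc (0:ℝ) 1)) := by
            refine lintegral_congr fun x => ?_
            have hxy : (fun y => A.indicator dens' (x, y))
                = (Set.Ico (f0' x) (l' j x)).indicator (fun _ => (n : ℝ≥0∞)) := by
              funext y
              by_cases h1 : y < l' j x <;> by_cases h2 : f0' x ≤ y <;>
                simp [Set.indicator, hAdef, hdens'def, h1, h2, Set.mem_Ico]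
            rw [hxy, lintegral_indicator measurableSet_Ico, setLIntegral_const, Real.volume_Ico,
              hofmax (l' j x - f0' x)]
        _ = (n : ℝ≥0∞) * ∫⁻ x, ENNReal.ofReal (max (l' j x - f0' x) 0)
            ∂((volume : Measure ℝ).restrict (Set.Icc (0:ℝ) 1)) :=
            lintegral_const_mul _ (((hl'meas j).sub hf0'meas).max measurable_const).ennreal_ofReal
        _ = (n : ℝ≥0∞) * ENNReal.ofReal (∫ x in Set.Icc (0:ℝ) 1, max (l' j x - f0' x) 0) := by
            rw [← ofReal_integral_eq_lintegral_ofReal hposint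
              (ae_of_all _ fun x => le_max_right _ _)]
        _ = (n : ℝ≥0∞) * ENNReal.ofReal (intPos (l j) f0) := by
            congr 1
            rw [intPos]
            refine congrArg ENNReal.ofReal (integral_congr_ae ?_)
            filter_upwards [hl'ae j hj, hf0'ae] with x h1 h2
            rw [h1, h2]
    have hμAne : intensity n f0 A ≠ ∞ := by
      rw [hμA]
      exact ENNReal.mul_ne_top (ENNReal.natCast_ne_top n) ENNReal.ofReal_ne_top
    have hintPosNonneg : 0 ≤ intPos (l j) f0 :=
      integral_nonneg fun x => le_max_right _ _
    rw [hEeq, hvoid A hAmeas, if_neg hμAne, hμA]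
    congr 2
    rw [ENNReal.toReal_mul, ENNReal.toReal_natCast, ENNReal.toReal_ofReal hintPosNonneg,
      neg_mul]
  -- put everything together
  calc ∫⁻ ω, post n pts Pi ι B ω ∂Pn
      ≤ ∫⁻ ω, U.indicator (fun _ => (1 : ℝ≥0∞)) ω ∂Pn := lintegral_mono_ae hmain
    _ = Pn U := by rw [lintegral_indicator hUmeas, setLIntegral_one]
    _ ≤ ∑' j : J, Pn (E j) := measure_iUnion_le _
    _ = ∑' j : J, ENNReal.ofReal (Real.exp (-(n : ℝ) * intPos (l (j : ℕ)) f0)) :=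
        tsum_congr fun j => hPE j j.2

end
end

section
/- For any $f_0\in L^1([0,1])$, any subset $\Theta_n\subset L^1([0,1])$, any $\eps>0$ and any $n\ge1$, the following chain of inequalities holds: $S_[\big(n,\{f\in\Theta_n:\int(f-f_0)_+\ge\eps\},f_0\big)\le e^{-n\eps/2}\,N_[(\eps/2,\Theta_n)\le e^{-n\eps/2}\,N(\eps/4,\Theta_n,\|\cdot\|_\infty)$. -/
open MeasureTheory Real Set Filter
open scoped ENNReal NNReal Topology

noncomputable section

/-- Extraction from an infimum over finsets. -/
lemma exists_of_iInf_ne_top' {ι : Type*} {P : ι → Prop} {c : ι → ℕ∞}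
    (h : (⨅ i, ⨅ (_ : P i), c i) ≠ ⊤) :
    ∃ i, P i ∧ c i ≤ ⨅ i, ⨅ (_ : P i), c i := by
  have hlt : (⨅ i, ⨅ (_ : P i), c i) < (⨅ i, ⨅ (_ : P i), c i) + 1 :=
    (ENat.lt_add_one_iff h).mpr le_rfl
  rw [iInf_lt_iff] at hlt
  obtain ⟨i, hi⟩ := hlt
  rw [iInf_lt_iff] at hi
  obtain ⟨hPi, hci⟩ := hi
  exact ⟨i, hPi, (ENat.lt_add_one_iff h).mp hci⟩

lemma volume_Icc01 : ((volume : Measure ℝ) (Set.Icc (0:ℝ) 1)).toReal = 1 := by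
  simp [Real.volume_Icc]

lemma integrableOn_const_Icc01 (c : ℝ) :
    IntegrableOn (fun _ : ℝ => c) (Set.Icc (0:ℝ) 1) :=
  integrableOn_const measure_Icc_lt_top.ne

/-- Key comparison: if `l ≤ f` a.e. on `[0,1]`, then
`∫ (f-f₀)₊ ≤ ∫ (l-f₀)₊ + ∫ (f - l)`. -/
lemma intPos_le_intPos_add {f l f0 : ℝ → ℝ} (hf : IntegrableOn f (Set.Icc (0:ℝ) 1))
    (hl : IntegrableOn l (Set.Icc (0:ℝ) 1)) (hf0 : IntegrableOn f0 (Set.Icc (0:ℝ) 1))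
    (hle : aeLeI l f) :
    intPos f f0 ≤ intPos l f0 + intI (fun x => f x - l x) := by
  have h1 : IntegrableOn (fun x => max (f x - f0 x) 0) (Set.Icc (0:ℝ) 1) :=
    (hf.sub hf0).pos_part
  have h2 : IntegrableOn (fun x => max (l x - f0 x) 0 + (f x - l x)) (Set.Icc (0:ℝ) 1) :=
    ((hl.sub hf0).pos_part).add (hf.sub hl)
  have hmono : intPos f f0 ≤ ∫ x in Set.Icc (0:ℝ) 1, (max (l x - f0 x) 0 + (f x - l x)) := by
    refine integral_mono_ae h1 h2 (hle.mono fun x hx => ?_)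
    show max (f x - f0 x) 0 ≤ max (l x - f0 x) 0 + (f x - l x)
    refine max_le ?_ ?_
    · have := le_max_left (l x - f0 x) (0:ℝ); linarith
    · have := le_max_right (l x - f0 x) (0:ℝ); linarith
  calc intPos f f0 ≤ _ := hmono
    _ = intPos l f0 + intI (fun x => f x - l x) :=
      integral_add ((hl.sub hf0).pos_part) (hf.sub hl)

/-- chain of inequalities between the separation quantity, the one-sided
bracketing number and the sup-norm covering number:
`S_[(n, {f ∈ Θₙ : ∫(f-f₀)₊ ≥ ε}, f₀) ≤ e^{-nε/2} N_[(ε/2, Θₙ) ≤ e^{-nε/2} N(ε/4, Θₙ, ‖·‖_∞)`. -/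
theorem stmt_7 (n : ℕ) (hn : 1 ≤ n) (f0 : ℝ → ℝ)
    (hf0 : IntegrableOn f0 (Set.Icc (0:ℝ) 1))
    (Θn : Set (ℝ → ℝ)) (hΘn : ∀ f ∈ Θn, IntegrableOn f (Set.Icc (0:ℝ) 1))
    (ε : ℝ) (hε : 0 < ε) :
    sepQ n {f ∈ Θn | ε ≤ intPos f f0} f0 ≤
        ENNReal.ofReal (Real.exp (-(n : ℝ) * ε / 2)) * (bracketNum (ε / 2) Θn : ℝ≥0∞) ∧
      ENNReal.ofReal (Real.exp (-(n : ℝ) * ε / 2)) * (bracketNum (ε / 2) Θn : ℝ≥0∞) ≤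
        ENNReal.ofReal (Real.exp (-(n : ℝ) * ε / 2)) * (supCover (ε / 4) Θn : ℝ≥0∞) := by
  classical
  constructor
  · -- first inequality
    by_cases hB : bracketNum (ε / 2) Θn = ⊤
    · rw [hB]
      rw [show ((⊤ : ℕ∞) : ℝ≥0∞) = ⊤ from rfl,
        ENNReal.mul_top (ENNReal.ofReal_pos.mpr (Real.exp_pos _)).ne']
      exact le_top
    · obtain ⟨G, ⟨hGint, hGbr⟩, hGcard⟩ := exists_of_iInf_ne_top' hB
      set F := {f ∈ Θn | ε ≤ intPos f f0} with hF
      set G' := G.filter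
        (fun lf => ∃ f ∈ F, aeLeI lf f ∧ intI (fun x => f x - lf x) ≤ ε / 2) with hG'
      set L := G'.toList with hLdef
      set l : ℕ → ℝ → ℝ := fun j => L.getD j f0 with hldef
      have hmem : ∀ j (hj : j < L.length), l j ∈ G' := by
        intro j hj
        have : l j = L.get ⟨j, hj⟩ := by
          rw [hldef]; exact List.getD_eq_get L f0 ⟨j, hj⟩
        rw [this]
        exact Finset.mem_toList.mp (L.get_mem _)
      set c : ℝ≥0∞ := ENNReal.ofReal (Real.exp (-(n : ℝ) * ε / 2)) with hc
      have hstep : sepQ n F f0 ≤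
          ∑' j : (↑(Finset.range L.length) : Set ℕ),
            ENNReal.ofReal (Real.exp (-(n : ℝ) * intPos (l (j : ℕ)) f0)) := by
        refine iInf_le_of_le l (iInf_le_of_le (↑(Finset.range L.length)) (iInf_le _ ?_))
        constructor
        · intro j hj
          have hj' : j < L.length := by simpa using hj
          exact hGint _ (Finset.mem_of_mem_filter _ (hmem j hj'))
        · intro f hf
          obtain ⟨l0, hl0G, hle, hint⟩ := hGbr f hf.1
          have hl0G' : l0 ∈ G' := Finset.mem_filter.mpr ⟨hl0G, f, hf, hle, hint⟩
          obtain ⟨⟨j, hj⟩, hget⟩ := List.mem_iff_get.mp (Finset.mem_toList.mpr hl0G')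
          have hlj : l j = l0 := (List.getD_eq_get L f0 ⟨j, hj⟩).trans hget
          exact ⟨j, Finset.mem_coe.mpr (Finset.mem_range.mpr hj), hlj ▸ hle⟩
      have hbound : ∀ j ∈ Finset.range L.length,
          ENNReal.ofReal (Real.exp (-(n : ℝ) * intPos (l j) f0)) ≤ c := by
        intro j hj
        have hj' : j < L.length := by simpa using hj
        obtain ⟨f, hfF, hle, hint⟩ := (Finset.mem_filter.mp (hmem j hj')).2
        have hlint := hGint _ (Finset.mem_of_mem_filter _ (hmem j hj'))
        have key := intPos_le_intPos_add (hΘn f hfF.1) hlint hf0 hle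
        have hεf : ε ≤ intPos f f0 := hfF.2
        have h2 : ε / 2 ≤ intPos (l j) f0 := by linarith
        rw [hc]
        apply ENNReal.ofReal_le_ofReal
        apply Real.exp_le_exp.mpr
        have hn0 : (0 : ℝ) ≤ (n : ℝ) := Nat.cast_nonneg n
        nlinarith
      calc sepQ n F f0 ≤ _ := hstep
        _ = ∑ j ∈ Finset.range L.length,
              ENNReal.ofReal (Real.exp (-(n : ℝ) * intPos (l j) f0)) :=
            by
              exact Finset.tsum_subtype' (Finset.range L.length)
                (fun j => ENNReal.ofReal (Real.exp (-(n : ℝ) * intPos (l j) f0)))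
        _ ≤ ∑ _j ∈ Finset.range L.length, c := Finset.sum_le_sum hbound
        _ = (L.length : ℝ≥0∞) * c := by simp [Finset.sum_const, nsmul_eq_mul]
        _ = c * (G'.card : ℝ≥0∞) := by rw [Finset.length_toList]; ring
        _ ≤ c * (G.card : ℝ≥0∞) :=
            mul_le_mul_right (by exact_mod_cast Finset.card_filter_le _ _) c
        _ ≤ c * (bracketNum (ε / 2) Θn : ℝ≥0∞) := by
            gcongr
            rw [← ENat.toENNReal_coe]
            exact ENat.toENNReal_le.mpr hGcard
  · -- second inequality
    refine mul_le_mul_right (ENat.toENNReal_le.mpr ?_) _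
    by_cases hS : supCover (ε / 4) Θn = ⊤
    · rw [hS]; exact le_top
    · obtain ⟨G, ⟨hGmeas, hGcov⟩, hGcard⟩ := exists_of_iInf_ne_top' hS
      have hgint : ∀ g ∈ G, ∀ f ∈ Θn, (∀ x ∈ Set.Icc (0:ℝ) 1, |f x - g x| ≤ ε / 4) →
          IntegrableOn g (Set.Icc (0:ℝ) 1) := by
        intro g hgG f hfΘ hfg
        refine Integrable.mono' ((hΘn f hfΘ).abs.add (integrableOn_const_Icc01 (ε / 4)))
          ((hGmeas g hgG).aestronglyMeasurable) ?_
        filter_upwards [ae_restrict_mem measurableSet_Icc] with x hx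
        have h1 := hfg x hx
        have h2 : |g x| - |f x| ≤ |g x - f x| := abs_sub_abs_le_abs_sub _ _
        rw [abs_sub_comm] at h2
        show |g x| ≤ |f x| + ε / 4
        linarith
      set G' := (G.filter (fun g => ∃ f ∈ Θn, ∀ x ∈ Set.Icc (0:ℝ) 1, |f x - g x| ≤ ε / 4)).image
        (fun g => fun x => g x - ε / 4) with hG'
      have hbr : bracketNum (ε / 2) Θn ≤ (G'.card : ℕ∞) := by
        refine iInf_le_of_le G' (iInf_le _ ⟨?_, ?_⟩)
        · intro lf hlf
          obtain ⟨g, hg, rfl⟩ := Finset.mem_image.mp hlf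
          obtain ⟨hgG, f, hfΘ, hfg⟩ := Finset.mem_filter.mp hg
          exact (hgint g hgG f hfΘ hfg).sub (integrableOn_const_Icc01 (ε / 4))
        · intro f hfΘ
          obtain ⟨g, hgG, hfg⟩ := hGcov f hfΘ
          refine ⟨fun x => g x - ε / 4,
            Finset.mem_image.mpr ⟨g, Finset.mem_filter.mpr ⟨hgG, f, hfΘ, hfg⟩, rfl⟩, ?_, ?_⟩
          · filter_upwards [ae_restrict_mem measurableSet_Icc] with x hx
            have := abs_le.mp (hfg x hx)
            linarith [this.1]
          · have hint : intI (fun x => f x - (g x - ε / 4)) ≤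
                ∫ _x in Set.Icc (0:ℝ) 1, (ε / 2 : ℝ) := by
              refine setIntegral_mono_on
                ((hΘn f hfΘ).sub ((hgint g hgG f hfΘ hfg).sub (integrableOn_const_Icc01 (ε / 4))))
                (integrableOn_const_Icc01 (ε / 2)) measurableSet_Icc ?_
              intro x hx
              have := abs_le.mp (hfg x hx)
              linarith [this.2]
            calc intI (fun x => f x - (g x - ε / 4)) ≤ _ := hint
              _ = ε / 2 := by rw [setIntegral_const, show (volume : Measure ℝ).real (Set.Icc (0:ℝ) 1) = 1 from volume_Icc01, one_smul]
      calc bracketNum (ε / 2) Θn ≤ (G'.card : ℕ∞) := hbr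
        _ ≤ (G.card : ℕ∞) := by
            exact_mod_cast Finset.card_image_le.trans (Finset.card_filter_le _ _)
        _ ≤ supCover (ε / 4) Θn := hGcard


end
end

section
/- Let $f_0\in L^1([0,1])$ and let $\Pi$ be a prior on a Polish space $\Theta$ embedding continuously into $L^1([0,1])$. Assume $\Theta_n\subseteq\Theta$ contains $f_0$ and is closed under pairwise maxima (if $f,g\in\Theta_n$ then $f\vee g\in\Theta_n$), and that the maximum likelihood estimator $\widehat f^{\mathrm{MLE}}$ over the parameter space $\Theta_n$ exists. Then for every $\eps_n>0$, $E_{f_0}\big[\Pi\big(f\in\Theta_n:\int(f-f_0)_+>\eps_n\,\big|\,N\big)\big]\le P_{f_0}\big(\int(\widehat f^{\mathrm{MLE}}-f_0)_+>\eps_n\big)$. -/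
open MeasureTheory Real Set Filter
open scoped ENNReal NNReal Topology

noncomputable section

/-- Lemma 2.7: posterior contraction from the MLE.
If `Θₙ ⊆ Θ` contains `f₀`, is closed under pairwise maxima, and a maximum likelihood
estimator over `Θₙ` exists, then
`E_{f₀}[Π(f ∈ Θₙ : ∫(f-f₀)₊ > εₙ | N)] ≤ P_{f₀}(∫(f̂^MLE - f₀)₊ > εₙ)`. -/
theorem stmt_8 {Ω Θ : Type*} [MeasurableSpace Ω] [MeasurableSpace Θ] [TopologicalSpace Θ]
    [PolishSpace Θ] [BorelSpace Θ] (n : ℕ) (hn : 1 ≤ n)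
    (P : ℕ → (ℝ → ℝ) → Measure Ω) (pts : Ω → ℕ → ℝ × ℝ)
    (hmodel : IsBoundaryModel P pts)
    (f0 : ℝ → ℝ) (hf0 : IntegrableOn f0 (Set.Icc (0:ℝ) 1))
    (Pi : Measure Θ) (ι : Θ → ℝ → ℝ) (hprior : IsL1Prior Pi ι)
    (Θn : Set Θ)
    (hf0mem : ∃ θ0 ∈ Θn, ι θ0 = f0)
    (hmax : ∀ θ1 ∈ Θn, ∀ θ2 ∈ Θn, ∃ θ ∈ Θn, ι θ = fun x => max (ι θ1 x) (ι θ2 x))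
    (θMLE : Ω → Θ) (hMLEmem : ∀ ω, θMLE ω ∈ Θn)
    (hMLE : ∀ ω, ∀ θ ∈ Θn, lik n pts (ι θ) ω ≤ lik n pts (ι (θMLE ω)) ω)
    (εn : ℝ) (hεn : 0 < εn) :
    ∫⁻ ω, post n pts Pi ι {θ ∈ Θn | εn < intPos (ι θ) f0} ω ∂(P n f0) ≤
      P n f0 {ω | εn < intPos (ι (θMLE ω)) f0} := by
  classical
  obtain ⟨θ0, hθ0n, hθ0⟩ := hf0mem
  obtain ⟨hPprob, hptsm, hvoid⟩ := hmodel n f0 hf0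
  haveI := hPprob
  obtain ⟨hPiprob, hιm, hιint, -⟩ := hprior
  set B : Set Θ := {θ ∈ Θn | εn < intPos (ι θ) f0} with hBdef
  set S : Set Ω := {ω | εn < intPos (ι (θMLE ω)) f0} with hSdef
  -- measurable version of f0
  have hf0m := hf0.aestronglyMeasurable
  set g : ℝ → ℝ := hf0m.mk f0 with hg
  have hgm : Measurable g := hf0m.stronglyMeasurable_mk.measurable
  set s : Set ℝ := toMeasurable (volume.restrict (Set.Icc (0:ℝ) 1)) {x | f0 x ≠ g x}
    with hsdef
  have hsm : MeasurableSet s := measurableSet_toMeasurable _ _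
  have hssub : {x | f0 x ≠ g x} ⊆ s := subset_toMeasurable _ _
  have hs0 : volume.restrict (Set.Icc (0:ℝ) 1) s = 0 := by
    rw [hsdef, measure_toMeasurable]
    exact hf0m.ae_eq_mk
  set R : Set (ℝ × ℝ) := Set.Icc (0:ℝ) 1 ×ˢ (Set.univ : Set ℝ) with hRdef
  have hRm : MeasurableSet R := measurableSet_Icc.prod MeasurableSet.univ
  set A : Set (ℝ × ℝ) :=
    Rᶜ ∪ s ×ˢ (Set.univ : Set ℝ) ∪
      ((Prod.fst ⁻¹' Set.Icc (0:ℝ) 1) ∩ {p : ℝ × ℝ | p.2 < g p.1}) with hAdef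
  have hAm : MeasurableSet A :=
    (hRm.compl.union (hsm.prod MeasurableSet.univ)).union
      ((measurableSet_Icc.preimage measurable_fst).inter
        (measurableSet_lt measurable_snd (hgm.comp measurable_fst)))
  -- the intensity measure of A is zero
  have hT0 : (volume : Measure (ℝ × ℝ)) ((s ∩ Set.Icc (0:ℝ) 1) ×ˢ (Set.univ : Set ℝ)) = 0 := by
    rw [Measure.volume_eq_prod, Measure.prod_prod]
    have h1 : (volume : Measure ℝ) (s ∩ Set.Icc (0:ℝ) 1) = 0 := by
      rw [← Measure.restrict_apply hsm]
      exact hs0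
    rw [h1, zero_mul]
  have hμA : intensity n f0 A = 0 := by
    have h1 : intensity n f0 A
        = ∫⁻ p in A ∩ R, (if f0 p.1 ≤ p.2 then (n:ℝ≥0∞) else 0) ∂volume := by
      rw [intensity, withDensity_apply _ hAm, Measure.restrict_restrict hAm]
    rw [h1]
    refine le_antisymm ?_ zero_le
    calc ∫⁻ p in A ∩ R, (if f0 p.1 ≤ p.2 then (n:ℝ≥0∞) else 0) ∂volume
        = ∫⁻ p, (A ∩ R).indicator (fun p => if f0 p.1 ≤ p.2 then (n:ℝ≥0∞) else 0) p
            ∂volume := (lintegral_indicator (hAm.inter hRm) _).symm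
      _ ≤ ∫⁻ p, ((s ∩ Set.Icc (0:ℝ) 1) ×ˢ (Set.univ : Set ℝ)).indicator
            (fun _ => (n:ℝ≥0∞)) p ∂volume := by
          refine lintegral_mono fun p => ?_
          by_cases hp : p ∈ A ∩ R
          · rw [Set.indicator_of_mem hp]
            by_cases hps : p.1 ∈ s
            · have hpT : p ∈ (s ∩ Set.Icc (0:ℝ) 1) ×ˢ (Set.univ : Set ℝ) :=
                ⟨⟨hps, hp.2.1⟩, Set.mem_univ _⟩
              rw [Set.indicator_of_mem hpT]
              split_ifs <;> simp
            · have hfg : f0 p.1 = g p.1 := by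
                by_contra hc
                exact hps (hssub hc)
              have hlt : p.2 < f0 p.1 := by
                rcases hp.1 with (h | h) | h
                · exact absurd hp.2 h
                · exact absurd h.1 hps
                · rw [hfg]; exact h.2
              rw [if_neg (not_le.mpr hlt)]
              exact zero_le
          · rw [Set.indicator_of_notMem hp]
            exact zero_le
      _ = (n:ℝ≥0∞) * volume ((s ∩ Set.Icc (0:ℝ) 1) ×ˢ (Set.univ : Set ℝ)) :=
          lintegral_indicator_const ((hsm.inter measurableSet_Icc).prod MeasurableSet.univ) _
      _ = 0 := by rw [hT0, mul_zero]
  -- the almost sure event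
  set E : Set Ω := {ω | ∀ i, pts ω i ∉ A} with hEdef
  have hEm : MeasurableSet E := by
    have h1 : E = ⋂ i, (fun ω => pts ω i) ⁻¹' Aᶜ := by
      ext ω; simp [hEdef]
    rw [h1]
    exact MeasurableSet.iInter fun i => (hptsm i) hAm.compl
  have hPE : P n f0 E = 1 := by
    rw [hvoid A hAm, hμA]
    simp
  have hPEc : P n f0 Eᶜ = 0 := by
    rw [measure_compl hEm (measure_ne_top _ _), hPE, measure_univ]
    simp
  have hEpt : ∀ ω ∈ E, ∀ i, (pts ω i).1 ∈ Set.Icc (0:ℝ) 1 ∧ f0 (pts ω i).1 ≤ (pts ω i).2 := by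
    intro ω hω i
    have h := hω i
    have h1 : pts ω i ∈ R := by
      by_contra hc
      exact h (Or.inl (Or.inl hc))
    have h2 : (pts ω i).1 ∉ s := fun hc => h (Or.inl (Or.inr ⟨hc, Set.mem_univ _⟩))
    have hfg : f0 (pts ω i).1 = g (pts ω i).1 := by
      by_contra hc
      exact h2 (hssub hc)
    refine ⟨h1.1, ?_⟩
    rw [hfg]
    by_contra hc
    exact h (Or.inr ⟨h1.1, not_le.mp hc⟩)
  -- the key claim
  have hkey : ∀ ω ∈ E, intPos (ι (θMLE ω)) f0 ≤ εn → ∀ θ ∈ B,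
      ¬ (∀ i, ι θ (pts ω i).1 ≤ (pts ω i).2) := by
    intro ω hωE hsmall θ hθ hcond
    obtain ⟨hθn, hθε⟩ := hθ
    obtain ⟨θ', hθ'n, hθ'eq⟩ := hmax θ hθn θ0 hθ0n
    rw [hθ0] at hθ'eq
    have hcond' : ω ∈ {ω' : Ω | ∀ i, ι θ' (pts ω' i).1 ≤ (pts ω' i).2} := by
      intro i
      simp only [hθ'eq]
      exact max_le (hcond i) ((hEpt ω hωE i).2)
    have hlik' : lik n pts (ι θ') ω = ENNReal.ofReal (Real.exp (n * intI (ι θ'))) :=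
      Set.indicator_of_mem hcond' _
    have hle := hMLE ω θ' hθ'n
    rw [hlik'] at hle
    have hposl : (0:ℝ≥0∞) < ENNReal.ofReal (Real.exp (n * intI (ι θ'))) :=
      ENNReal.ofReal_pos.mpr (Real.exp_pos _)
    have hmlecond : ω ∈ {ω' : Ω | ∀ i, ι (θMLE ω) (pts ω' i).1 ≤ (pts ω' i).2} := by
      by_contra hc
      rw [lik, Set.indicator_of_notMem hc] at hle
      exact absurd hle (not_le.mpr hposl)
    have hlikM : lik n pts (ι (θMLE ω)) ω
        = ENNReal.ofReal (Real.exp (n * intI (ι (θMLE ω)))) :=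
      Set.indicator_of_mem hmlecond _
    rw [hlikM] at hle
    have hreal : (n:ℝ) * intI (ι θ') ≤ n * intI (ι (θMLE ω)) :=
      Real.exp_le_exp.mp ((ENNReal.ofReal_le_ofReal_iff (Real.exp_pos _).le).mp hle)
    have hnpos : (0:ℝ) < n := by
      have : (0:ℕ) < n := by omega
      exact_mod_cast this
    have hintle : intI (ι θ') ≤ intI (ι (θMLE ω)) := le_of_mul_le_mul_left hreal hnpos
    have hiθ := hιint θ
    have hiM := hιint (θMLE ω)
    have hposθ : IntegrableOn (fun x => max (ι θ x - f0 x) 0) (Set.Icc (0:ℝ) 1) :=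
      (hiθ.sub hf0).pos_part
    have hposM : IntegrableOn (fun x => max (ι (θMLE ω) x - f0 x) 0) (Set.Icc (0:ℝ) 1) :=
      (hiM.sub hf0).pos_part
    have hid1 : intI (ι θ') = intI f0 + intPos (ι θ) f0 := by
      rw [hθ'eq]
      unfold intI intPos
      rw [← integral_add hf0 hposθ]
      refine integral_congr_ae (Filter.Eventually.of_forall fun x => ?_)
      show max (ι θ x) (f0 x) = f0 x + max (ι θ x - f0 x) 0
      rcases le_total (ι θ x) (f0 x) with h | h
      · rw [max_eq_right h, max_eq_right (sub_nonpos.mpr h), add_zero]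
      · rw [max_eq_left h, max_eq_left (sub_nonneg.mpr h)]; ring
    have hid2 : intI (ι (θMLE ω)) ≤ intI f0 + intPos (ι (θMLE ω)) f0 := by
      unfold intI intPos
      rw [← integral_add hf0 hposM]
      refine integral_mono hiM (hf0.add hposM) fun x => ?_
      have h := le_max_left (ι (θMLE ω) x - f0 x) 0
      simp only [Pi.add_apply]
      linarith
    linarith
  -- pointwise bound on the posterior
  have hbound : ∀ ω, post n pts Pi ι B ω ≤ (S ∪ Eᶜ).indicator (fun _ => (1:ℝ≥0∞)) ω := by
    intro ω
    by_cases hω : ω ∈ S ∪ Eᶜ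
    · rw [Set.indicator_of_mem hω]
      unfold post
      refine le_trans (ENNReal.div_le_div_right (setLIntegral_le_lintegral _ _) _) ?_
      exact ENNReal.div_self_le_one
    · rw [Set.indicator_of_notMem hω]
      have hωS : ω ∉ S := fun h => hω (Or.inl h)
      have hωE : ω ∈ E := by
        by_contra h
        exact hω (Or.inr h)
      have hsmall : intPos (ι (θMLE ω)) f0 ≤ εn := not_lt.mp hωS
      unfold post
      have hnum : ∫⁻ θ in B, lik n pts (ι θ) ω ∂Pi = 0 := by
        set D : Set Θ := {θ | ∀ i, ι θ (pts ω i).1 ≤ (pts ω i).2}ᶜ with hDdef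
        have hDm : MeasurableSet D := by
          refine MeasurableSet.compl ?_
          have h1 : {θ : Θ | ∀ i, ι θ (pts ω i).1 ≤ (pts ω i).2}
              = ⋂ i, {θ : Θ | ι θ (pts ω i).1 ≤ (pts ω i).2} := by
            ext θ; simp
          rw [h1]
          refine MeasurableSet.iInter fun i => ?_
          exact measurableSet_le (hιm.comp (measurable_id.prodMk measurable_const))
            measurable_const
        have hBD : B ⊆ D := fun θ hθ => hkey ω hωE hsmall θ hθ
        refine le_antisymm (le_trans (lintegral_mono_set hBD) ?_) zero_le
        have h2 : ∫⁻ θ in D, lik n pts (ι θ) ω ∂Pi = ∫⁻ θ in D, 0 ∂Pi := by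
          refine setLIntegral_congr_fun hDm (fun θ hθ => ?_)
          exact Set.indicator_of_notMem
            (s := {ω' : Ω | ∀ i, ι θ (pts ω' i).1 ≤ (pts ω' i).2}) (a := ω) hθ _
        rw [h2, lintegral_zero]
      rw [hnum, ENNReal.zero_div]
  calc ∫⁻ ω, post n pts Pi ι B ω ∂(P n f0)
      ≤ ∫⁻ ω, (S ∪ Eᶜ).indicator (fun _ => (1:ℝ≥0∞)) ω ∂(P n f0) := lintegral_mono hbound
    _ ≤ 1 * P n f0 (S ∪ Eᶜ) := lintegral_indicator_const_le _ _
    _ ≤ P n f0 S + P n f0 Eᶜ := by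
        rw [one_mul]
        exact measure_union_le _ _
    _ = P n f0 S := by rw [hPEc, add_zero]

end
end
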